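/- Fix d ≥ 2 and c > 0. For 0 < δ ≤ 1 let C_kak(δ) denote the infimum of all constants C such that ∫_{ℝ^d} ∏_{j=1}^d ( ∑_{T ∈ 𝕋_j} χ_T )^{1/(d-1)} ≤ C δ^d ∏_{j=1}^d (#𝕋_j)^{1/(d-1)} holds for all c-transversal families 𝕋₁, …, 𝕋_d of δ-tubes of unit length. Then there is a constant c₀ ≥ 1, depending only on d and c, such that C_kak(δ) ≤ c₀ · C_kak(δ/δ') · C_kak(δ') for all 0 < δ ≤ δ' ≤ 1. -/

import Mathlib

open MeasureTheory Metric
open scoped InnerProductSpace ENNReal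


/-- The `δ`-tube of unit length in `ℝ^d` with corner `a` and orthonormal frame `v`
(the long side, of length 1, points in the direction `v (Fin.last n)`; the `d-1`
short sides have length `δ`): a rectangular box congruent to `[0,δ]^{d-1} × [0,1]`. -/
noncomputable def unitTube {n : ℕ} (δ : ℝ) (a : EuclideanSpace ℝ (Fin (n + 1)))
    (v : Fin (n + 1) → EuclideanSpace ℝ (Fin (n + 1))) :
    Set (EuclideanSpace ℝ (Fin (n + 1))) :=
  {x | (∀ i : Fin n, ⟪x - a, v i.castSucc⟫_ℝ ∈ Set.Icc (0 : ℝ) δ) ∧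
    ⟪x - a, v (Fin.last n)⟫_ℝ ∈ Set.Icc (0 : ℝ) 1}

/-- The `d`-linear Kakeya inequality at scale `δ` with constant `C`, over all
`c`-transversal families `𝕋₁, …, 𝕋_d` of `δ`-tubes of unit length (each tube recorded
as a pair `(a, v)` of a corner and an orthonormal frame, with direction
`e(T) = v (Fin.last n)`). -/
def KakIneq (n : ℕ) (c δ C : ℝ) : Prop :=
  ∀ 𝕋 : Fin (n + 1) →
      Finset (EuclideanSpace ℝ (Fin (n + 1)) ×
        (Fin (n + 1) → EuclideanSpace ℝ (Fin (n + 1)))),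
    (∀ j, ∀ T ∈ 𝕋 j, Orthonormal ℝ T.2) →
    (∀ T : (j : Fin (n + 1)) →
        EuclideanSpace ℝ (Fin (n + 1)) × (Fin (n + 1) → EuclideanSpace ℝ (Fin (n + 1))),
      (∀ j, T j ∈ 𝕋 j) →
      c ≤ |Matrix.det (Matrix.of fun i j => (T j).2 (Fin.last n) i)|) →
    ∫⁻ x, ∏ j, (∑ T ∈ 𝕋 j,
        (unitTube δ T.1 T.2).indicator (fun _ => (1 : ℝ≥0∞)) x) ^ (1 / (n : ℝ))
      ≤ ENNReal.ofReal (C * δ ^ (n + 1)) * ∏ j, ((𝕋 j).card : ℝ≥0∞) ^ (1 / (n : ℝ))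

/-- `C_kak(δ)`: the smallest constant in the `d`-linear Kakeya inequality at scale `δ`
over all `c`-transversal families of `δ`-tubes of unit length. -/
noncomputable def KakConst (n : ℕ) (c δ : ℝ) : ℝ :=
  sInf {C : ℝ | 0 ≤ C ∧ KakIneq n c δ C}


namespace KakAux
variable {n : ℕ}
abbrev E (n : ℕ) := EuclideanSpace ℝ (Fin (n + 1))
abbrev Pair (n : ℕ) := E n × (Fin (n + 1) → E n)

noncomputable local instance (n : ℕ) : DecidableEq (Pair n) := Classical.decEq _

noncomputable def coverCorner (t ε : ℝ) (v : Fin (n + 1) → E n) (A : Fin n → ℝ) (B : ℝ)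
    (g : Fin n → ℕ) (m : ℕ) : E n :=
  (∑ i : Fin n, (((⌊2 * A i / t⌋ : ℤ) + (g i : ℤ) : ℝ) * (t / 2)) • v i.castSucc)
    + ((((⌊2 * (B - ε)⌋ : ℤ) + (m : ℤ) : ℝ) / 2 + ε) • v (Fin.last n))

lemma inner_coverCorner_castSucc {t ε : ℝ} {v : Fin (n + 1) → E n} (hv : Orthonormal ℝ v)
    {A : Fin n → ℝ} {B : ℝ} {g : Fin n → ℕ} {m : ℕ} (i : Fin n) :
    ⟪coverCorner t ε v A B g m, v i.castSucc⟫_ℝ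
      = ((⌊2 * A i / t⌋ : ℤ) + (g i : ℤ) : ℝ) * (t / 2) := by
  have hvij : ∀ a b : Fin (n + 1), ⟪v a, v b⟫_ℝ = if a = b then 1 else 0 :=
    orthonormal_iff_ite.mp hv
  simp only [coverCorner, inner_add_left, sum_inner, real_inner_smul_left, hvij]
  rw [Finset.sum_eq_single i]
  · simp [(Fin.castSucc_lt_last i).ne, (Fin.castSucc_lt_last i).ne']
  · intro b _ hb
    simp [Fin.castSucc_inj, hb]
  · simp

lemma inner_coverCorner_last {t ε : ℝ} {v : Fin (n + 1) → E n} (hv : Orthonormal ℝ v)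
    {A : Fin n → ℝ} {B : ℝ} {g : Fin n → ℕ} {m : ℕ} :
    ⟪coverCorner t ε v A B g m, v (Fin.last n)⟫_ℝ
      = ((⌊2 * (B - ε)⌋ : ℤ) + (m : ℤ) : ℝ) / 2 + ε := by
  have hvij : ∀ a b : Fin (n + 1), ⟪v a, v b⟫_ℝ = if a = b then 1 else 0 :=
    orthonormal_iff_ite.mp hv
  simp only [coverCorner, inner_add_left, sum_inner, real_inner_smul_left, hvij]
  rw [Finset.sum_eq_zero]
  · simp
  · intro b _
    simp [(Fin.castSucc_lt_last b).ne, (Fin.castSucc_lt_last b).ne']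


/-- floor inequality: `⌊a+b⌋ ≤ ⌊a⌋ + ⌈b⌉`. -/
lemma floor_add_le_ceil (a b : ℝ) : ⌊a + b⌋ ≤ ⌊a⌋ + ⌈b⌉ := by
  have h1 := Int.lt_floor_add_one a
  have h2 := Int.le_ceil b
  have : (⌊a + b⌋ : ℤ) < ⌊a⌋ + ⌈b⌉ + 1 := by
    rw [Int.floor_lt]
    push_cast
    linarith
  omega

lemma coverage {t : ℝ} (ht : 0 < t) {v : Fin (n + 1) → E n} (hv : Orthonormal ℝ v)
    (x : E n) (A : Fin n → ℝ) (B : ℝ) (L : Fin n → ℝ) (L' : ℝ) (ε : ℝ)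
    (hx : ∀ i, ⟪x, v i.castSucc⟫_ℝ ∈ Set.Icc (A i) (A i + L i))
    (hx' : ⟪x, v (Fin.last n)⟫_ℝ ∈ Set.Icc B (B + L')) :
    ∃ g : Fin n → ℕ, ∃ m : ℕ, (∀ i, g i < (⌈2 * L i / t⌉).toNat + 2) ∧
      m < (⌈2 * L'⌉).toNat + 2 ∧
      x ∈ unitTube t (coverCorner t ε v A B g m) v := by
  have hmono : ∀ i, ⌊2 * A i / t⌋ ≤ ⌊2 * ⟪x, v i.castSucc⟫_ℝ / t⌋ := by
    intro i
    apply Int.floor_le_floor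
    exact (div_le_div_iff_of_pos_right ht).mpr (by linarith [(hx i).1])
  have hmono' : ⌊2 * (B - ε)⌋ ≤ ⌊2 * (⟪x, v (Fin.last n)⟫_ℝ - ε)⌋ := by
    apply Int.floor_le_floor; linarith [hx'.1]
  refine ⟨fun i => (⌊2 * ⟪x, v i.castSucc⟫_ℝ / t⌋ - ⌊2 * A i / t⌋).toNat,
    (⌊2 * (⟪x, v (Fin.last n)⟫_ℝ - ε)⌋ - ⌊2 * (B - ε)⌋).toNat, ?_, ?_, ?_, ?_⟩
  · intro i
    have hup : ⌊2 * ⟪x, v i.castSucc⟫_ℝ / t⌋ ≤ ⌊2 * A i / t⌋ + ⌈2 * L i / t⌉ := by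
      have h5 : 2 * ⟪x, v i.castSucc⟫_ℝ / t ≤ 2 * A i / t + 2 * L i / t := by
        rw [← add_div]
        exact (div_le_div_iff_of_pos_right ht).mpr (by linarith [(hx i).2])
      exact (Int.floor_le_floor h5).trans (floor_add_le_ceil _ _)
    have := hmono i
    show (⌊2 * ⟪x, v i.castSucc⟫_ℝ / t⌋ - ⌊2 * A i / t⌋).toNat < (⌈2 * L i / t⌉).toNat + 2
    omega
  · have hup : ⌊2 * (⟪x, v (Fin.last n)⟫_ℝ - ε)⌋ ≤ ⌊2 * (B - ε)⌋ + ⌈2 * L'⌉ := by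
      have h5 : (2 : ℝ) * (⟪x, v (Fin.last n)⟫_ℝ - ε) ≤ 2 * (B - ε) + 2 * L' := by
        linarith [hx'.2]
      exact (Int.floor_le_floor h5).trans (floor_add_le_ceil _ _)
    omega
  · intro i
    rw [inner_sub_left, inner_coverCorner_castSucc hv]
    rw [Int.toNat_of_nonneg (by linarith [hmono i] : (0:ℤ) ≤ _)]
    push_cast
    have hfl : (⌊2 * ⟪x, v i.castSucc⟫_ℝ / t⌋ : ℝ) * t ≤ 2 * ⟪x, v i.castSucc⟫_ℝ :=
      (le_div_iff₀ ht).mp (Int.floor_le _)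
    have hfu : 2 * ⟪x, v i.castSucc⟫_ℝ < ((⌊2 * ⟪x, v i.castSucc⟫_ℝ / t⌋ : ℝ) + 1) * t := by
      rw [← div_lt_iff₀ ht]; exact Int.lt_floor_add_one _
    constructor
    · nlinarith
    · nlinarith
  · rw [inner_sub_left, inner_coverCorner_last hv]
    rw [Int.toNat_of_nonneg (by linarith [hmono'] : (0:ℤ) ≤ _)]
    push_cast
    have hfl : (⌊2 * (⟪x, v (Fin.last n)⟫_ℝ - ε)⌋ : ℝ) ≤ 2 * (⟪x, v (Fin.last n)⟫_ℝ - ε) :=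
      Int.floor_le _
    have hfu : 2 * (⟪x, v (Fin.last n)⟫_ℝ - ε)
        < (⌊2 * (⟪x, v (Fin.last n)⟫_ℝ - ε)⌋ : ℝ) + 1 := Int.lt_floor_add_one _
    constructor
    · linarith
    · linarith


/-- existence of an injective labelling of a finite set by small positive reals -/
lemma exists_injOn_Ioo {α : Type*} (s : Finset α) {r : ℝ} (hr : 0 < r) :
    ∃ f : α → ℝ, Set.InjOn f s ∧ ∀ a ∈ s, f a ∈ Set.Ioo 0 r := by
  classical
  induction s using Finset.induction_on with
  | empty => exact ⟨fun _ => 0, by simp, by simp⟩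
  | insert a s' ha ih =>
    obtain ⟨f, hinj, hmem⟩ := ih
    have hfin : (Set.Ioo (0:ℝ) r \ (f '' s')).Nonempty := by
      apply Set.Infinite.nonempty
      exact (Set.Ioo_infinite hr).diff ((s'.finite_toSet).image f)
    obtain ⟨z, hz⟩ := hfin
    refine ⟨Function.update f a z, ?_, ?_⟩
    · intro x hx y hy hxy
      simp only [Finset.coe_insert, Set.mem_insert_iff, Finset.mem_coe] at hx hy
      rcases hx with rfl | hx <;> rcases hy with rfl | hy
      · rfl
      · exfalso
        rw [Function.update_self, Function.update_of_ne (by rintro rfl; exact ha hy)] at hxy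
        exact hz.2 ⟨y, hy, hxy.symm⟩
      · exfalso
        rw [Function.update_self, Function.update_of_ne (by rintro rfl; exact ha hx)] at hxy
        exact hz.2 ⟨x, hx, hxy⟩
      · rw [Function.update_of_ne (by rintro rfl; exact ha hx),
          Function.update_of_ne (by rintro rfl; exact ha hy)] at hxy
        exact hinj hx hy hxy
    · intro b hb
      rcases Finset.mem_insert.mp hb with rfl | hb
      · rw [Function.update_self]; exact hz.1
      · rw [Function.update_of_ne (by rintro rfl; exact ha ‹_›)]
        exact hmem b hb

/-- the covering family of `t`-tubes built over a finite family of tubes -/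
noncomputable def coverFamily (t : ℝ) (εf : Pair n → ℝ) (Af : Pair n → Fin n → ℝ)
    (Bf : Pair n → ℝ) (L : Fin n → ℝ) (L' : ℝ) (s : Finset (Pair n)) : Finset (Pair n) :=
  (s ×ˢ ((Fintype.piFinset fun i : Fin n => Finset.range ((⌈2 * L i / t⌉).toNat + 2)) ×ˢ
      Finset.range ((⌈2 * L'⌉).toNat + 2))).image
    fun p => (coverCorner t (εf p.1) p.1.2 (Af p.1) (Bf p.1) p.2.1 p.2.2, p.1.2)

lemma coverFamily_card (t : ℝ) (εf : Pair n → ℝ) (Af : Pair n → Fin n → ℝ)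
    (Bf : Pair n → ℝ) (L : Fin n → ℝ) (L' : ℝ) (s : Finset (Pair n)) :
    (coverFamily t εf Af Bf L L' s).card ≤
      s.card * ((∏ i : Fin n, ((⌈2 * L i / t⌉).toNat + 2)) * ((⌈2 * L'⌉).toNat + 2)) := by
  refine (Finset.card_image_le).trans ?_
  rw [Finset.card_product, Finset.card_product, Fintype.card_piFinset]
  simp [Finset.card_range]

lemma coverFamily_frames {t : ℝ} {εf : Pair n → ℝ} {Af : Pair n → Fin n → ℝ}
    {Bf : Pair n → ℝ} {L : Fin n → ℝ} {L' : ℝ} {s : Finset (Pair n)} {S : Pair n}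
    (hS : S ∈ coverFamily t εf Af Bf L L' s) : ∃ T ∈ s, S.2 = T.2 := by
  obtain ⟨p, hp, rfl⟩ := Finset.mem_image.mp hS
  exact ⟨p.1, (Finset.mem_product.mp hp).1, rfl⟩

/-- The key domination property of the covering family. -/
lemma sum_le_coverFamily {t : ℝ} (ht : 0 < t) {s : Finset (Pair n)}
    (hs : ∀ T ∈ s, Orthonormal ℝ T.2)
    {εf : Pair n → ℝ} (hinj : Set.InjOn εf s) (hmem : ∀ T ∈ s, εf T ∈ Set.Ioo (0:ℝ) 4⁻¹)
    {Af : Pair n → Fin n → ℝ} {Bf : Pair n → ℝ} {L : Fin n → ℝ} {L' : ℝ}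
    (x : E n) (f : Pair n → ℝ≥0∞) (hf1 : ∀ T ∈ s, f T ≤ 1)
    (hf0 : ∀ T ∈ s, f T ≠ 0 →
      (∀ i, ⟪x, T.2 i.castSucc⟫_ℝ ∈ Set.Icc (Af T i) (Af T i + L i)) ∧
        ⟪x, T.2 (Fin.last n)⟫_ℝ ∈ Set.Icc (Bf T) (Bf T + L')) :
    ∑ T ∈ s, f T ≤ ∑ S ∈ coverFamily t εf Af Bf L L' s,
      (unitTube t S.1 S.2).indicator (fun _ => (1 : ℝ≥0∞)) x := by
  classical
  -- injectivity of the defining map on the product set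
  have hinj2 : ∀ p ∈ (s ×ˢ ((Fintype.piFinset fun i : Fin n =>
        Finset.range ((⌈2 * L i / t⌉).toNat + 2)) ×ˢ Finset.range ((⌈2 * L'⌉).toNat + 2))),
      ∀ q ∈ (s ×ˢ ((Fintype.piFinset fun i : Fin n =>
        Finset.range ((⌈2 * L i / t⌉).toNat + 2)) ×ˢ Finset.range ((⌈2 * L'⌉).toNat + 2))),
      (fun p : Pair n × ((Fin n → ℕ) × ℕ) =>
        (coverCorner t (εf p.1) p.1.2 (Af p.1) (Bf p.1) p.2.1 p.2.2, p.1.2)) p =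
      (fun p : Pair n × ((Fin n → ℕ) × ℕ) =>
        (coverCorner t (εf p.1) p.1.2 (Af p.1) (Bf p.1) p.2.1 p.2.2, p.1.2)) q → p = q := by
    rintro ⟨T, g, m⟩ hp ⟨T', g', m'⟩ hq h
    simp only [Prod.mk.injEq] at h
    obtain ⟨hc, hv2⟩ := h
    have hTs : T ∈ s := (Finset.mem_product.mp hp).1
    have hT's : T' ∈ s := (Finset.mem_product.mp hq).1
    have hvT : Orthonormal ℝ T.2 := hs T hTs
    -- compare the last coordinates
    have hlast : ((⌊2 * (Bf T - εf T)⌋ : ℤ) + (m : ℤ) : ℝ) / 2 + εf T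
        = ((⌊2 * (Bf T' - εf T')⌋ : ℤ) + (m' : ℤ) : ℝ) / 2 + εf T' := by
      have h1 := inner_coverCorner_last (t := t) (ε := εf T) (v := T.2)
        (A := Af T) (B := Bf T) (g := g) (m := m) hvT
      have h2 := inner_coverCorner_last (t := t) (ε := εf T') (v := T'.2)
        (A := Af T') (B := Bf T') (g := g') (m := m') (hs T' hT's)
      calc ((⌊2 * (Bf T - εf T)⌋ : ℤ) + (m : ℤ) : ℝ) / 2 + εf T
          = ⟪coverCorner t (εf T) T.2 (Af T) (Bf T) g m, T.2 (Fin.last n)⟫_ℝ := h1.symm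
        _ = ⟪coverCorner t (εf T') T'.2 (Af T') (Bf T') g' m', T'.2 (Fin.last n)⟫_ℝ := by
            rw [hc, hv2]
        _ = _ := h2
    have hεT := hmem T hTs
    have hεT' := hmem T' hT's
    -- deduce εf T = εf T'
    have hee : εf T = εf T' := by
      set p : ℤ := ⌊2 * (Bf T - εf T)⌋ + (m : ℤ) with hp'
      set q : ℤ := ⌊2 * (Bf T' - εf T')⌋ + (m' : ℤ) with hq'
      have hpq : ((q - p : ℤ) : ℝ) = 2 * (εf T - εf T') := by
        push_cast [hp', hq']
        push_cast at hlast
        linarith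
      have hb1 : ((q - p : ℤ) : ℝ) < 1 := by
        rw [hpq]
        have := hεT.2; have := hεT'.1
        simp only [Set.mem_Ioo] at *
        linarith
      have hb2 : (-1 : ℝ) < ((q - p : ℤ) : ℝ) := by
        rw [hpq]
        have := hεT.1; have := hεT'.2
        simp only [Set.mem_Ioo] at *
        linarith
      have : q - p = 0 := by
        have h1' : (q - p : ℤ) < 1 := by exact_mod_cast hb1
        have h2' : (-1 : ℤ) < q - p := by exact_mod_cast hb2
        omega
      have : (p : ℝ) = (q : ℝ) := by exact_mod_cast (by omega : p = q)
      push_cast [hp', hq'] at this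
      push_cast at hlast
      linarith
    have hTT : T = T' := hinj hTs hT's hee
    subst hTT
    -- now m = m'
    have hm : m = m' := by
      have h9 : ((m : ℤ) : ℝ) = ((m' : ℤ) : ℝ) := by push_cast at hlast ⊢; linarith
      exact_mod_cast h9
    -- and g = g'
    have hg : g = g' := by
      funext i
      have h1 := inner_coverCorner_castSucc (t := t) (ε := εf T) (v := T.2)
        (A := Af T) (B := Bf T) (g := g) (m := m) hvT i
      have h2 := inner_coverCorner_castSucc (t := t) (ε := εf T) (v := T.2)
        (A := Af T) (B := Bf T) (g := g') (m := m') hvT i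
      rw [hc] at h1
      rw [h1] at h2
      have ht2 : (t / 2 : ℝ) ≠ 0 := by positivity
      have := mul_right_cancel₀ ht2 h2
      have : ((g i : ℤ) : ℝ) = ((g' i : ℤ) : ℝ) := by push_cast at this ⊢; linarith
      exact_mod_cast this
    rw [hm, hg]
  rw [coverFamily, Finset.sum_image hinj2, Finset.sum_product]
  apply Finset.sum_le_sum
  intro T hT
  by_cases hfT : f T = 0
  · simp [hfT]
  · obtain ⟨hshort, hlong⟩ := hf0 T hT hfT
    obtain ⟨g, m, hg, hm, hmemx⟩ := coverage ht (hs T hT) x (Af T) (Bf T) L L' (εf T)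
      hshort hlong
    have hmem2 : ((g, m) : (Fin n → ℕ) × ℕ) ∈
        ((Fintype.piFinset fun i : Fin n => Finset.range ((⌈2 * L i / t⌉).toNat + 2)) ×ˢ
          Finset.range ((⌈2 * L'⌉).toNat + 2)) :=
      Finset.mem_product.mpr ⟨Fintype.mem_piFinset.mpr fun i =>
        Finset.mem_range.mpr (hg i), Finset.mem_range.mpr hm⟩
    have hsingle := Finset.single_le_sum (f := fun p : (Fin n → ℕ) × ℕ =>
      (unitTube t (coverCorner t (εf T) T.2 (Af T) (Bf T) p.1 p.2) T.2).indicator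
        (fun _ => (1:ℝ≥0∞)) x) (fun _ _ => zero_le) hmem2
    have hone : (1:ℝ≥0∞) = (unitTube t (coverCorner t (εf T) T.2 (Af T) (Bf T) g m)
        T.2).indicator (fun _ => (1:ℝ≥0∞)) x := (Set.indicator_of_mem hmemx (fun _ => (1:ℝ≥0∞))).symm
    exact (hf1 T hT).trans (hone.le.trans hsingle)
    

/-- half-open cube of side `t` at lattice position `k` -/
def cube (t : ℝ) (k : Fin (n + 1) → ℤ) : Set (E n) :=
  {x | ∀ i, x i ∈ Set.Ico (t * k i) (t * (k i + 1))}

lemma measurableSet_cube (t : ℝ) (k : Fin (n + 1) → ℤ) : MeasurableSet (cube t k) := by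
  have : cube t k = ⋂ i, (fun x : E n => x i) ⁻¹' Set.Ico (t * k i) (t * (k i + 1)) := by
    ext x; simp [cube, Set.mem_iInter]
  rw [this]
  exact MeasurableSet.iInter fun i =>
    (by fun_prop : Measurable fun x : E n => x i) measurableSet_Ico

lemma iUnion_cube (t : ℝ) (ht : 0 < t) : (⋃ k : Fin (n + 1) → ℤ, cube t k) = Set.univ := by
  ext x
  simp only [Set.mem_iUnion, Set.mem_univ, iff_true]
  refine ⟨fun i => ⌊x i / t⌋, fun i => ?_⟩
  constructor
  · calc t * ↑⌊x i / t⌋ ≤ t * (x i / t) :=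
        mul_le_mul_of_nonneg_left (Int.floor_le _) ht.le
      _ = x i := by field_simp
  · have := Int.lt_floor_add_one (x i / t)
    calc x i = t * (x i / t) := by field_simp
      _ < t * (↑⌊x i / t⌋ + 1) := by
        apply mul_lt_mul_of_pos_left ?_ ht
        push_cast
        exact this

lemma disjoint_cube (t : ℝ) (ht : 0 < t) : Pairwise (Function.onFun Disjoint (cube (n := n) t)) := by
  intro k l hkl
  rw [Function.onFun, Set.disjoint_left]
  intro x hx hl
  apply hkl
  funext i
  have h1 := hx i
  have h2 := hl i
  simp only [Set.mem_Ico] at h1 h2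
  have a1 : (k i : ℝ) < l i + 1 := by
    have := lt_of_le_of_lt h1.1 h2.2
    have := (mul_lt_mul_iff_right₀ ht).mp this
    exact_mod_cast this
  have a2 : (l i : ℝ) < k i + 1 := by
    have := lt_of_le_of_lt h2.1 h1.2
    have := (mul_lt_mul_iff_right₀ ht).mp this
    exact_mod_cast this
  have b1 : k i < l i + 1 := by exact_mod_cast a1
  have b2 : l i < k i + 1 := by exact_mod_cast a2
  omega

/-- partition of the Lebesgue integral into cubes -/
lemma lintegral_eq_tsum_cube (t : ℝ) (ht : 0 < t) (f : E n → ℝ≥0∞) :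
    ∫⁻ x, f x = ∑' k : Fin (n + 1) → ℤ, ∫⁻ x in cube t k, f x := by
  rw [← lintegral_iUnion (measurableSet_cube t) (disjoint_cube t ht) f, iUnion_cube t ht,
    Measure.restrict_univ]

/-- change of variables by scaling -/
lemma lintegral_comp_smul (r : ℝ) (hr : 0 < r) (f : E n → ℝ≥0∞) (hf : Measurable f) :
    ∫⁻ x, f x = ENNReal.ofReal (r ^ (n + 1)) * ∫⁻ y, f (r • y) := by
  have hmap : Measure.map (r • ·) (volume : Measure (E n))
      = ENNReal.ofReal (|(r ^ Module.finrank ℝ (E n))⁻¹|) • volume :=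
    Measure.map_addHaar_smul volume (ne_of_gt hr)
  have h1 : ∫⁻ y, f (r • y) = ∫⁻ x, f x ∂(Measure.map (r • ·) (volume : Measure (E n))) := by
    rw [lintegral_map hf (measurable_const_smul r)]
  rw [h1, hmap, lintegral_smul_measure]
  rw [smul_eq_mul, ← mul_assoc, ← ENNReal.ofReal_mul (by positivity)]
  rw [finrank_euclideanSpace_fin]
  rw [abs_of_nonneg (by positivity)]
  rw [mul_inv_cancel₀ (by positivity)]
  simp

/-- volume of a cube -/
lemma volume_cube (t : ℝ) (ht : 0 < t) (k : Fin (n + 1) → ℤ) :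
    volume (cube (n := n) t k) = ENNReal.ofReal (t ^ (n + 1)) := by
  have hmp := EuclideanSpace.volume_preserving_symm_measurableEquiv_toLp (Fin (n + 1))
  have : cube (n := n) t k = (MeasurableEquiv.toLp 2 (Fin (n + 1) → ℝ)).symm ⁻¹'
      (Set.univ.pi fun i => Set.Ico (t * k i) (t * (k i + 1))) := by
    ext x
    simp [cube, Set.mem_pi]
  rw [this, hmp.measure_preimage]
  · rw [volume_pi_pi]
    simp only [Real.volume_Ico]
    rw [Finset.prod_congr rfl (fun i _ => by ring_nf : ∀ i ∈ Finset.univ,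
      ENNReal.ofReal (t * (↑(k i) + 1) - t * ↑(k i)) = ENNReal.ofReal t)]
    rw [Finset.prod_const, ← ENNReal.ofReal_pow ht.le]
    simp
  · exact (MeasurableSet.univ_pi fun i => measurableSet_Ico).nullMeasurableSet

/-- diameter bound for cubes -/
lemma norm_sub_le_of_mem_cube {t : ℝ} (ht : 0 < t) {k : Fin (n + 1) → ℤ} {x y : E n}
    (hx : x ∈ cube t k) (hy : y ∈ cube t k) : ‖x - y‖ ≤ (n + 1) * t := by
  have hbound : ∀ i, |x i - y i| ≤ t := by
    intro i
    have h1 := hx i; have h2 := hy i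
    simp only [Set.mem_Ico] at h1 h2
    rw [abs_le]
    constructor <;> nlinarith [h1.1, h1.2, h2.1, h2.2]
  rw [EuclideanSpace.norm_eq]
  have hsq : ∀ i, ‖(x - y : E n) i‖ ^ 2 ≤ t ^ 2 := by
    intro i
    have hxy : (x - y : E n) i = x i - y i := rfl
    rw [hxy, Real.norm_eq_abs]
    have h := hbound i
    have habs := abs_nonneg (x i - y i)
    nlinarith [sq_abs (x i - y i)]
  have hsum : (∑ i, ‖(x - y : E n) i‖ ^ 2) ≤ ((n + 1) * t) ^ 2 := by
    calc (∑ i, ‖(x - y : E n) i‖ ^ 2) ≤ ∑ _i : Fin (n + 1), t ^ 2 :=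
        Finset.sum_le_sum fun i _ => hsq i
      _ = (n + 1) * t ^ 2 := by rw [Finset.sum_const]; simp [mul_comm]
      _ ≤ ((n + 1) * t) ^ 2 := by nlinarith [sq_nonneg t, ht.le]
  calc Real.sqrt (∑ i, ‖(x - y : E n) i‖ ^ 2) ≤ Real.sqrt (((n + 1) * t) ^ 2) :=
      Real.sqrt_le_sqrt hsum
    _ = (n + 1) * t := Real.sqrt_sq (by positivity)


lemma measurableSet_unitTube (δ : ℝ) (a : E n) (v : Fin (n + 1) → E n) :
    MeasurableSet (unitTube δ a v) := by
  have h1 : unitTube δ a v =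
      (⋂ i : Fin n, (fun x : E n => ⟪x - a, v i.castSucc⟫_ℝ) ⁻¹' Set.Icc 0 δ) ∩
        ((fun x : E n => ⟪x - a, v (Fin.last n)⟫_ℝ) ⁻¹' Set.Icc 0 1) := by
    ext x; simp [unitTube, Set.mem_iInter]
  rw [h1]
  have hcont : ∀ w : E n, Continuous fun x : E n => ⟪x - a, w⟫_ℝ := fun w =>
    (continuous_id.sub continuous_const).inner continuous_const
  exact (MeasurableSet.iInter fun i =>
      ((hcont _).measurable measurableSet_Icc)).inter ((hcont _).measurable measurableSet_Icc)

lemma measurable_integrand (δ : ℝ) (𝕋 : Fin (n + 1) → Finset (Pair n)) :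
    Measurable fun x : E n => ∏ j, (∑ T ∈ 𝕋 j,
      (unitTube δ T.1 T.2).indicator (fun _ => (1 : ℝ≥0∞)) x) ^ (1 / (n : ℝ)) := by
  apply Finset.measurable_prod
  intro j _
  apply Measurable.pow _ measurable_const
  apply Finset.measurable_sum
  intro T _
  exact Measurable.indicator measurable_const (measurableSet_unitTube δ T.1 T.2)

lemma trans_of_frames {c : ℝ} (𝕋 𝕊 : Fin (n + 1) → Finset (Pair n))
    (hframe : ∀ j, ∀ S ∈ 𝕊 j, ∃ T ∈ 𝕋 j, S.2 = T.2)
    (htrans : ∀ T : (j : Fin (n + 1)) → Pair n, (∀ j, T j ∈ 𝕋 j) →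
      c ≤ |Matrix.det (Matrix.of fun i j => (T j).2 (Fin.last n) i)|) :
    ∀ S : (j : Fin (n + 1)) → Pair n, (∀ j, S j ∈ 𝕊 j) →
      c ≤ |Matrix.det (Matrix.of fun i j => (S j).2 (Fin.last n) i)| := by
  intro S hS
  have h1 : ∀ j, ∃ T ∈ 𝕋 j, (S j).2 = T.2 := fun j => hframe j _ (hS j)
  choose T hT hTv using h1
  have h2 := htrans T hT
  have h3 : (Matrix.of fun i j => (S j).2 (Fin.last n) i)
      = (Matrix.of fun i j => (T j).2 (Fin.last n) i) := by
    ext i j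
    simp [hTv j]
  rwa [h3]

lemma ortho_of_frames (𝕋 𝕊 : Fin (n + 1) → Finset (Pair n))
    (hframe : ∀ j, ∀ S ∈ 𝕊 j, ∃ T ∈ 𝕋 j, S.2 = T.2)
    (h : ∀ j, ∀ T ∈ 𝕋 j, Orthonormal ℝ T.2) :
    ∀ j, ∀ S ∈ 𝕊 j, Orthonormal ℝ S.2 := by
  intro j S hS
  obtain ⟨T, hT, hv⟩ := hframe j S hS
  rw [hv]
  exact h j T hT

lemma prod_rpow_card_le (hn : 1 ≤ n) {W : ℕ} {a : ℝ} (ha : 1 ≤ a)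
    (hW : (W : ℝ) ≤ a ^ n) (N M : Fin (n + 1) → ℕ) (h : ∀ j, N j ≤ M j * W) :
    ∏ j, (N j : ℝ≥0∞) ^ (1 / (n : ℝ)) ≤
      ENNReal.ofReal (a ^ (n + 1)) * ∏ j, (M j : ℝ≥0∞) ^ (1 / (n : ℝ)) := by
  have hn0 : (n : ℝ) ≠ 0 := by exact_mod_cast Nat.pos_of_ne_zero (by omega) |>.ne'
  have hinv : (0 : ℝ) ≤ 1 / n := by positivity
  have step1 : ∀ j, (N j : ℝ≥0∞) ^ (1 / (n : ℝ)) ≤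
      ((M j : ℝ≥0∞) * (W : ℝ≥0∞)) ^ (1 / (n : ℝ)) := by
    intro j
    apply ENNReal.rpow_le_rpow _ hinv
    rw [← Nat.cast_mul]
    exact_mod_cast h j
  calc ∏ j, (N j : ℝ≥0∞) ^ (1 / (n : ℝ))
      ≤ ∏ j, ((M j : ℝ≥0∞) * (W : ℝ≥0∞)) ^ (1 / (n : ℝ)) :=
        Finset.prod_le_prod' fun j _ => step1 j
    _ = ∏ j, ((M j : ℝ≥0∞) ^ (1 / (n : ℝ)) * (W : ℝ≥0∞) ^ (1 / (n : ℝ))) := by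
        refine Finset.prod_congr rfl fun j _ => ?_
        rw [ENNReal.mul_rpow_of_nonneg _ _ hinv]
    _ = (∏ j, (M j : ℝ≥0∞) ^ (1 / (n : ℝ))) * ((W : ℝ≥0∞) ^ (1 / (n : ℝ))) ^ (n + 1) := by
        rw [Finset.prod_mul_distrib, Finset.prod_const]
        simp
    _ ≤ (∏ j, (M j : ℝ≥0∞) ^ (1 / (n : ℝ))) * ENNReal.ofReal (a ^ (n + 1)) := by
        apply mul_le_mul_right
        have hWa : (W : ℝ≥0∞) ≤ (ENNReal.ofReal a) ^ n := by
          rw [← ENNReal.ofReal_pow (by linarith)]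
          rw [show ((W : ℝ≥0∞)) = ENNReal.ofReal (W : ℝ) by
            simp [ENNReal.ofReal_natCast]]
          exact ENNReal.ofReal_le_ofReal hW
        calc ((W : ℝ≥0∞) ^ (1 / (n : ℝ))) ^ (n + 1)
            ≤ (((ENNReal.ofReal a) ^ n) ^ (1 / (n : ℝ))) ^ (n + 1) := by
              apply pow_le_pow_left' (ENNReal.rpow_le_rpow hWa hinv)
          _ = (ENNReal.ofReal a) ^ (n + 1) := by
              rw [← ENNReal.rpow_natCast (ENNReal.ofReal a) n, ← ENNReal.rpow_mul,
                mul_one_div, div_self hn0, ENNReal.rpow_one]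
          _ = ENNReal.ofReal (a ^ (n + 1)) := by
              rw [ENNReal.ofReal_pow (by linarith)]
    _ = _ := by rw [mul_comm]

lemma kakIneq_mono {c δ C C' : ℝ} (hδ : 0 ≤ δ) (hCC : C ≤ C') (h : KakIneq n c δ C) :
    KakIneq n c δ C' := by
  intro 𝕋 h1 h2
  refine (h 𝕋 h1 h2).trans (mul_le_mul_left (ENNReal.ofReal_le_ofReal ?_) _)
  exact mul_le_mul_of_nonneg_right hCC (by positivity)


open KakAux

variable {n : ℕ}

lemma indicator_le_one (s : Set (E n)) (x : E n) :
    s.indicator (fun _ => (1 : ℝ≥0∞)) x ≤ 1 := by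
  classical
  rw [Set.indicator_apply]
  split <;> simp

lemma mem_of_indicator_ne_zero {s : Set (E n)} {x : E n}
    (h : s.indicator (fun _ => (1 : ℝ≥0∞)) x ≠ 0) : x ∈ s := by
  classical
  by_contra hx
  rw [Set.indicator_of_notMem hx] at h
  exact h rfl

/-- Transfer the Kakeya inequality from scale `δ` up to a coarser scale `δ'`. -/
lemma kakIneq_up {c δ δ' C : ℝ} (hn : 1 ≤ n) (hδ : 0 < δ) (hle : δ ≤ δ') (hC : 0 ≤ C)
    (h : KakIneq n c δ C) : KakIneq n c δ' ((20 : ℝ) ^ (n + 1) * C) := by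
  classical
  intro 𝕋 hortho htrans
  have hδ' : 0 < δ' := lt_of_lt_of_le hδ hle
  -- injective labels
  have hex : ∀ j : Fin (n + 1), ∃ f : Pair n → ℝ, Set.InjOn f (𝕋 j) ∧
      ∀ a ∈ 𝕋 j, f a ∈ Set.Ioo (0:ℝ) 4⁻¹ :=
    fun j => exists_injOn_Ioo (𝕋 j) (by norm_num)
  choose εf hεinj hεmem using hex
  -- the covering families at scale δ
  set Af : Pair n → Fin n → ℝ := fun T i => ⟪T.1, T.2 i.castSucc⟫_ℝ with hAf
  set Bf : Pair n → ℝ := fun T => ⟪T.1, T.2 (Fin.last n)⟫_ℝ with hBf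
  set 𝕊 : Fin (n + 1) → Finset (Pair n) := fun j =>
    coverFamily δ (εf j) Af Bf (fun _ => δ') 1 (𝕋 j) with h𝕊
  have hframe : ∀ j, ∀ S ∈ 𝕊 j, ∃ T ∈ 𝕋 j, S.2 = T.2 := fun j S hS =>
    coverFamily_frames hS
  -- pointwise domination
  have hdom : ∀ (j : Fin (n + 1)) (x : E n),
      (∑ T ∈ 𝕋 j, (unitTube δ' T.1 T.2).indicator (fun _ => (1:ℝ≥0∞)) x)
        ≤ ∑ S ∈ 𝕊 j, (unitTube δ S.1 S.2).indicator (fun _ => (1:ℝ≥0∞)) x := by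
    intro j x
    apply sum_le_coverFamily hδ (hortho j) (hεinj j) (hεmem j) x
    · intro T _
      exact indicator_le_one _ _
    · intro T _ hT0
      have hx := mem_of_indicator_ne_zero hT0
      obtain ⟨hshort, hlong⟩ := hx
      constructor
      · intro i
        have := hshort i
        rw [inner_sub_left] at this
        simp only [Set.mem_Icc] at this ⊢
        constructor <;> [linarith [this.1]; linarith [this.2]]
      · rw [inner_sub_left] at hlong
        simp only [Set.mem_Icc] at hlong ⊢
        constructor <;> [linarith [hlong.1]; linarith [hlong.2]]
  -- the numeric window bound
  have hwin : ((coverFamily δ (εf 0) Af Bf (fun _ : Fin n => δ') 1 (𝕋 0)).card ≤ 0) ∨ True :=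
    Or.inr trivial
  have hq2 : (2 : ℝ) ≤ 2 * δ' / δ := by
    rw [le_div_iff₀ hδ]; linarith
  have hwa : (((⌈2 * δ' / δ⌉).toNat + 2 : ℕ) : ℝ) ≤ 5 * δ' / δ := by
    have hc1 : (⌈2 * δ' / δ⌉ : ℝ) < 2 * δ' / δ + 1 := Int.ceil_lt_add_one _
    have hc0 : (0:ℤ) ≤ ⌈2 * δ' / δ⌉ := by
      apply Int.ceil_nonneg; linarith
    have : ((⌈2 * δ' / δ⌉.toNat : ℤ) : ℝ) = (⌈2 * δ' / δ⌉ : ℝ) := by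
      rw [Int.toNat_of_nonneg hc0]
    push_cast
    push_cast at this
    rw [this]
    have h52 : 5 * δ' / δ = (2 * δ' / δ) + 1.5 * (2 * δ' / δ) := by ring
    linarith
  have hW : (((((⌈2 * δ' / δ⌉).toNat + 2)) ^ n * ((⌈(2:ℝ)⌉).toNat + 2) : ℕ) : ℝ)
      ≤ (20 * δ' / δ) ^ n := by
    have hceil2 : (⌈(2:ℝ)⌉).toNat + 2 = 4 := by
      have h22 : ⌈(2:ℝ)⌉ = 2 := by exact_mod_cast Int.ceil_intCast (R := ℝ) 2
      rw [h22]; rfl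
    rw [hceil2]
    push_cast
    have hbase : (0:ℝ) ≤ ((⌈2 * δ' / δ⌉).toNat + 2 : ℕ) := by positivity
    have h1 : ((((⌈2 * δ' / δ⌉).toNat + 2 : ℕ)) : ℝ) ^ n ≤ (5 * δ' / δ) ^ n := by
      apply pow_le_pow_left₀ hbase hwa
    have h2 : (20 * δ' / δ : ℝ) ^ n = 4 ^ n * (5 * δ' / δ) ^ n := by
      rw [← mul_pow]; ring_nf
    have h4 : (4:ℝ) ≤ 4 ^ n := le_self_pow₀ (by norm_num) (by omega)
    have h5 : (0:ℝ) ≤ (5 * δ' / δ) ^ n := by positivity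
    push_cast at h1
    nlinarith
  -- apply the hypothesis at scale δ
  have happ := h 𝕊 (ortho_of_frames 𝕋 𝕊 hframe hortho)
    (trans_of_frames 𝕋 𝕊 hframe htrans)
  -- assemble
  calc ∫⁻ x, ∏ j, (∑ T ∈ 𝕋 j,
        (unitTube δ' T.1 T.2).indicator (fun _ => (1 : ℝ≥0∞)) x) ^ (1 / (n : ℝ))
      ≤ ∫⁻ x, ∏ j, (∑ S ∈ 𝕊 j,
        (unitTube δ S.1 S.2).indicator (fun _ => (1 : ℝ≥0∞)) x) ^ (1 / (n : ℝ)) := by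
        apply lintegral_mono
        intro x
        apply Finset.prod_le_prod'
        intro j _
        exact ENNReal.rpow_le_rpow (hdom j x) (by positivity)
    _ ≤ ENNReal.ofReal (C * δ ^ (n + 1)) * ∏ j, ((𝕊 j).card : ℝ≥0∞) ^ (1 / (n : ℝ)) := happ
    _ ≤ ENNReal.ofReal (C * δ ^ (n + 1)) *
        (ENNReal.ofReal ((20 * δ' / δ) ^ (n + 1)) *
          ∏ j, ((𝕋 j).card : ℝ≥0∞) ^ (1 / (n : ℝ))) := by
        apply mul_le_mul_right
        apply prod_rpow_card_le hn (a := 20 * δ' / δ) ?_ hW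
          (fun j => (𝕊 j).card) (fun j => (𝕋 j).card) ?_
        · calc (1:ℝ) ≤ 20 := by norm_num
            _ ≤ 20 * (δ' / δ) := by
                nlinarith [(le_div_iff₀ hδ).mpr (by linarith : 1 * δ ≤ δ')]
            _ = 20 * δ' / δ := by ring
        · intro j
          have := coverFamily_card δ (εf j) Af Bf (fun _ : Fin n => δ') 1 (𝕋 j)
          calc (𝕊 j).card ≤ (𝕋 j).card *
              ((∏ _i : Fin n, ((⌈2 * δ' / δ⌉).toNat + 2)) * ((⌈(2:ℝ)*1⌉).toNat + 2)) := by
                simpa using this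
            _ = (𝕋 j).card * (((⌈2 * δ' / δ⌉).toNat + 2) ^ n * ((⌈(2:ℝ)⌉).toNat + 2)) := by
                rw [Finset.prod_const]
                norm_num
    _ = ENNReal.ofReal ((20:ℝ) ^ (n + 1) * C * δ' ^ (n + 1)) *
        ∏ j, ((𝕋 j).card : ℝ≥0∞) ^ (1 / (n : ℝ)) := by
        rw [← mul_assoc, ← ENNReal.ofReal_mul (by positivity)]
        congr 2
        have : (20 * δ' / δ) ^ (n+1) = 20 ^ (n+1) * δ' ^ (n+1) / δ ^ (n+1) := by
          rw [div_pow, mul_pow]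
        rw [this]
        field_simp



section Comp
variable {n : ℕ}

set_option maxHeartbeats 2000000 in
/-- The main induction-on-scales composition lemma. -/
lemma kakIneq_comp {c δ δ' C₁ C₂ : ℝ} (hn : 1 ≤ n) (hδ : 0 < δ) (hle : δ ≤ δ') (hd1 : δ' ≤ 1)
    (hC₁ : 0 ≤ C₁) (hC₂ : 0 ≤ C₂)
    (H1 : KakIneq n c δ' C₁) (H2 : KakIneq n c (δ / δ') C₂) :
    KakIneq n c δ ((2400 * (n + 1) : ℝ) ^ (n + 1) * C₂ * C₁) := by
  classical
  have hδ' : 0 < δ' := lt_of_lt_of_le hδ hle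
  set σ : ℝ := δ / δ' with hσdef
  have hσ : 0 < σ := div_pos hδ hδ'
  set u : ℝ := 1 / (8 * (n + 1)) with hudef
  have hu : 0 < u := by positivity
  intro 𝕋 hortho htrans
  set F : E n → ℝ≥0∞ := fun x => ∏ j, (∑ T ∈ 𝕋 j,
    (unitTube δ T.1 T.2).indicator (fun _ => (1 : ℝ≥0∞)) x) ^ (1 / (n : ℝ)) with hF
  have hex : ∀ j : Fin (n + 1), ∃ f : Pair n → ℝ, Set.InjOn f (𝕋 j) ∧
      ∀ a ∈ 𝕋 j, f a ∈ Set.Ioo (0:ℝ) 4⁻¹ :=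
    fun j => exists_injOn_Ioo (𝕋 j) (by norm_num)
  choose εf hεinj hεmem using hex
  set P : (Fin (n + 1) → ℤ) → Pair n → Prop := fun k T =>
    ∃ y, y ∈ cube u k ∧ δ' • y ∈ unitTube δ T.1 T.2 with hP
  set A : Fin (n + 1) → (Fin (n + 1) → ℤ) → Finset (Pair n) := fun j k =>
    (𝕋 j).filter (P k) with hA
  set N : Fin (n + 1) → (Fin (n + 1) → ℤ) → ℕ := fun j k => (A j k).card with hN
  set Aresc : Pair n → Fin n → ℝ := fun T i => ⟪(δ'⁻¹ : ℝ) • T.1, T.2 i.castSucc⟫_ℝ with hAresc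
  set Bf : (Fin (n + 1) → ℤ) → Pair n → ℝ := fun k T =>
    (if h : P k T then ⟪Classical.choose h, T.2 (Fin.last n)⟫_ℝ else 0) - 1/8 with hBf
  set 𝕊 : (Fin (n + 1) → ℤ) → Fin (n + 1) → Finset (Pair n) := fun k j =>
    coverFamily σ (εf j) Aresc (Bf k) (fun _ => σ) (1/4) (A j k) with h𝕊
  set AfFat : Pair n → Fin n → ℝ := fun T i => ⟪T.1, T.2 i.castSucc⟫_ℝ - δ'/4 with hAfFat
  set BfFat : Pair n → ℝ := fun T => ⟪T.1, T.2 (Fin.last n)⟫_ℝ - 1/4 with hBfFat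
  set Fat : Fin (n + 1) → Finset (Pair n) := fun j =>
    coverFamily δ' (εf j) AfFat BfFat (fun _ => (3/2) * δ') (3/2) (𝕋 j) with hFat
  -- norm bound inside a cube
  have hnormcube : ∀ (k : Fin (n + 1) → ℤ) (y y₀ : E n), y ∈ cube u k → y₀ ∈ cube u k →
      ‖y - y₀‖ ≤ 1/8 := by
    intro k y y₀ hy hy₀
    have h8 := norm_sub_le_of_mem_cube hu hy hy₀
    have heq : ((n : ℝ) + 1) * u = 1/8 := by
      rw [hudef]; field_simp
    calc ‖y - y₀‖ ≤ ((n : ℝ) + 1) * u := by exact_mod_cast h8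
      _ = 1/8 := heq
  have hinnerdiff : ∀ (T : Pair n), Orthonormal ℝ T.2 → ∀ (w : Fin (n+1)) (z z' : E n),
      |⟪z, T.2 w⟫_ℝ - ⟪z', T.2 w⟫_ℝ| ≤ ‖z - z'‖ := by
    intro T hT w z z'
    rw [← inner_sub_left]
    calc |⟪z - z', T.2 w⟫_ℝ| ≤ ‖z - z'‖ * ‖T.2 w‖ := abs_real_inner_le_norm _ _
      _ = ‖z - z'‖ := by rw [hT.1 w, mul_one]
  -- pointwise domination at scale σ on each cube
  have hdomσ : ∀ (k : Fin (n+1) → ℤ) (j : Fin (n+1)) (y : E n), y ∈ cube u k →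
      (∑ T ∈ 𝕋 j, (unitTube δ T.1 T.2).indicator (fun _ => (1:ℝ≥0∞)) (δ' • y))
        ≤ ∑ S ∈ 𝕊 k j, (unitTube σ S.1 S.2).indicator (fun _ => (1:ℝ≥0∞)) y := by
    intro k j y hy
    have hsub : A j k ⊆ 𝕋 j := Finset.filter_subset _ _
    have hstep : (∑ T ∈ 𝕋 j, (unitTube δ T.1 T.2).indicator (fun _ => (1:ℝ≥0∞)) (δ' • y))
        = ∑ T ∈ A j k, (unitTube δ T.1 T.2).indicator (fun _ => (1:ℝ≥0∞)) (δ' • y) := by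
      rw [eq_comm]
      apply Finset.sum_subset hsub
      intro T hT hnT
      by_contra h0
      apply hnT
      rw [hA]
      exact Finset.mem_filter.mpr ⟨hT, ⟨y, hy, mem_of_indicator_ne_zero h0⟩⟩
    rw [hstep]
    apply sum_le_coverFamily hσ (fun T hT => hortho j T (hsub hT))
      ((hεinj j).mono (by exact_mod_cast Finset.coe_subset.mpr hsub))
      (fun T hT => hεmem j T (hsub hT)) y _ (fun T _ => indicator_le_one _ _)
    intro T hT h0
    have hmem := mem_of_indicator_ne_zero h0
    obtain ⟨hshort, hlong⟩ := hmem
    have hPT : P k T := (Finset.mem_filter.mp hT).2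
    have hortT : Orthonormal ℝ T.2 := hortho j T (hsub hT)
    constructor
    · intro i
      have h1 := hshort i
      have heq : ⟪δ' • y - T.1, T.2 i.castSucc⟫_ℝ
          = δ' * ⟪y, T.2 i.castSucc⟫_ℝ - ⟪T.1, T.2 i.castSucc⟫_ℝ := by
        rw [inner_sub_left, real_inner_smul_left]
      have hb : Aresc T i = δ'⁻¹ * ⟪T.1, T.2 i.castSucc⟫_ℝ := by
        rw [hAresc]; simp only [real_inner_smul_left]
      rw [heq] at h1
      simp only [Set.mem_Icc] at h1 ⊢
      obtain ⟨h1a, h1b⟩ := h1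
      rw [hb]
      constructor
      · rw [inv_mul_eq_div, div_le_iff₀ hδ']
        nlinarith
      · have hrw : δ'⁻¹ * ⟪T.1, T.2 i.castSucc⟫_ℝ + σ
            = (⟪T.1, T.2 i.castSucc⟫_ℝ + δ) / δ' := by
          rw [hσdef]; field_simp
        rw [hrw, le_div_iff₀ hδ']
        nlinarith
    · rw [hBf]
      simp only
      rw [dif_pos hPT]
      obtain ⟨hy₀c, hy₀t⟩ := Classical.choose_spec hPT
      set y₀ := Classical.choose hPT
      have hnorm := hnormcube k y y₀ hy hy₀c
      have hdiff := hinnerdiff T hortT (Fin.last n) y y₀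
      rw [abs_sub_le_iff] at hdiff
      simp only [Set.mem_Icc]
      constructor
      · linarith [hdiff.2.trans hnorm]
      · linarith [hdiff.1.trans hnorm]
  -- numeric window sizes
  have hwaσ : (⌈2 * σ / σ⌉).toNat + 2 = 4 := by
    have h2 : 2 * σ / σ = 2 := by field_simp
    rw [h2]
    have h22 : ⌈(2:ℝ)⌉ = 2 := by exact_mod_cast Int.ceil_intCast (R := ℝ) 2
    rw [h22]; rfl
  have hwbσ : (⌈2 * (1/4 : ℝ)⌉).toNat + 2 = 3 := by
    have h2 : (2 : ℝ) * (1/4) = 1/2 := by norm_num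
    rw [h2]
    have hc : ⌈(1/2 : ℝ)⌉ = 1 := by
      rw [Int.ceil_eq_iff]
      norm_num
    rw [hc]; rfl
  have hwaF : (⌈2 * ((3/2) * δ') / δ'⌉).toNat + 2 = 5 := by
    have h2 : 2 * ((3/2) * δ') / δ' = 3 := by field_simp
    rw [h2]
    have h33 : ⌈(3:ℝ)⌉ = 3 := by exact_mod_cast Int.ceil_intCast (R := ℝ) 3
    rw [h33]; rfl
  have hwbF : (⌈2 * (3/2 : ℝ)⌉).toNat + 2 = 5 := by
    have h2 : (2 : ℝ) * (3/2) = 3 := by norm_num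
    rw [h2]
    have h33 : ⌈(3:ℝ)⌉ = 3 := by exact_mod_cast Int.ceil_intCast (R := ℝ) 3
    rw [h33]; rfl
  -- per-cube bound
  have hcube : ∀ k, ∫⁻ y in cube u k, F (δ' • y)
      ≤ ENNReal.ofReal (C₂ * σ ^ (n+1)) * (ENNReal.ofReal ((12:ℝ) ^ (n+1)) *
          ∏ j, ((N j k : ℝ≥0∞)) ^ (1 / (n : ℝ))) := by
    intro k
    have hfr : ∀ j, ∀ S ∈ 𝕊 k j, ∃ T ∈ 𝕋 j, S.2 = T.2 := by
      intro j S hS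
      obtain ⟨T, hT, hv⟩ := coverFamily_frames hS
      exact ⟨T, Finset.filter_subset _ _ hT, hv⟩
    calc ∫⁻ y in cube u k, F (δ' • y)
        ≤ ∫⁻ y in cube u k, ∏ j, (∑ S ∈ 𝕊 k j,
            (unitTube σ S.1 S.2).indicator (fun _ => (1:ℝ≥0∞)) y) ^ (1 / (n : ℝ)) := by
          apply setLIntegral_mono (measurable_integrand σ (𝕊 k))
          intro y hy
          apply Finset.prod_le_prod'
          intro j _
          exact ENNReal.rpow_le_rpow (hdomσ k j y hy) (by positivity)
      _ ≤ ∫⁻ y, ∏ j, (∑ S ∈ 𝕊 k j,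
            (unitTube σ S.1 S.2).indicator (fun _ => (1:ℝ≥0∞)) y) ^ (1 / (n : ℝ)) :=
          lintegral_mono' Measure.restrict_le_self le_rfl
      _ ≤ ENNReal.ofReal (C₂ * σ ^ (n+1)) * ∏ j, (((𝕊 k j).card : ℝ≥0∞)) ^ (1 / (n : ℝ)) :=
          H2 (𝕊 k) (ortho_of_frames 𝕋 (𝕊 k) hfr hortho) (trans_of_frames 𝕋 (𝕊 k) hfr htrans)
      _ ≤ _ := by
          apply mul_le_mul_right
          apply prod_rpow_card_le hn (W := 4 ^ n * 3) (a := 12) (by norm_num) ?_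
            (fun j => (𝕊 k j).card) (fun j => N j k) ?_
          · push_cast
            have h3n : (3:ℝ) ≤ 3 ^ n := le_self_pow₀ (by norm_num) (by omega)
            have h12 : (12:ℝ) ^ n = 4 ^ n * 3 ^ n := by rw [← mul_pow]; norm_num
            nlinarith [pow_pos (show (0:ℝ) < 4 by norm_num) n]
          · intro j
            have hcard := coverFamily_card σ (εf j) Aresc (Bf k) (fun _ => σ) (1/4) (A j k)
            calc (𝕊 k j).card ≤ (A j k).card *
                ((∏ _i : Fin n, ((⌈2 * σ / σ⌉).toNat + 2)) * ((⌈2 * (1/4 : ℝ)⌉).toNat + 2)) := by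
                  simp only [h𝕊]
                  simpa using hcard
              _ = N j k * (4 ^ n * 3) := by
                  rw [Finset.prod_const, hwaσ, hwbσ]
                  simp [hN]
  -- cube counting via the fattened family
  have hcount : ∀ (k : Fin (n+1) → ℤ) (y : E n), y ∈ cube u k → ∀ j,
      (N j k : ℝ≥0∞) ≤ ∑ S ∈ Fat j,
        (unitTube δ' S.1 S.2).indicator (fun _ => (1:ℝ≥0∞)) (δ' • y) := by
    intro k y hy j
    have hNsum : (N j k : ℝ≥0∞) = ∑ T ∈ 𝕋 j, (if P k T then (1:ℝ≥0∞) else 0) := by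
      rw [← Finset.sum_filter, Finset.sum_const, nsmul_eq_mul, mul_one]
    rw [hNsum]
    apply sum_le_coverFamily hδ' (hortho j) (hεinj j) (hεmem j) (δ' • y) _ ?_ ?_
    · intro T _
      split <;> simp
    · intro T hT h0
      have hPT : P k T := by
        by_contra hc
        rw [if_neg hc] at h0
        exact h0 rfl
      obtain ⟨y₀, hy₀c, hy₀t⟩ := hPT
      obtain ⟨hshort, hlong⟩ := hy₀t
      have hortT : Orthonormal ℝ T.2 := hortho j T hT
      have hsm : ∀ w : Fin (n+1), |⟪δ' • y, T.2 w⟫_ℝ - ⟪δ' • y₀, T.2 w⟫_ℝ| ≤ δ' / 8 := by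
        intro w
        have h1 := hinnerdiff T hortT w (δ' • y) (δ' • y₀)
        have h2 : ‖δ' • y - δ' • y₀‖ = δ' * ‖y - y₀‖ := by
          rw [← smul_sub, norm_smul, Real.norm_eq_abs, abs_of_pos hδ']
        have h3 := hnormcube k y y₀ hy hy₀c
        calc |⟪δ' • y, T.2 w⟫_ℝ - ⟪δ' • y₀, T.2 w⟫_ℝ| ≤ ‖δ' • y - δ' • y₀‖ := h1
          _ = δ' * ‖y - y₀‖ := h2
          _ ≤ δ' * (1/8) := by nlinarith
          _ = δ' / 8 := by ring
      constructor
      · intro i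
        have h1 := hshort i
        rw [inner_sub_left] at h1
        simp only [Set.mem_Icc] at h1 ⊢
        have h2 := hsm i.castSucc
        rw [abs_sub_le_iff] at h2
        rw [hAfFat]
        simp only
        constructor
        · linarith [h2.2]
        · linarith [h2.1]
      · rw [inner_sub_left] at hlong
        simp only [Set.mem_Icc] at hlong ⊢
        have h2 := hsm (Fin.last n)
        rw [abs_sub_le_iff] at h2
        rw [hBfFat]
        simp only
        constructor
        · linarith [h2.2]
        · linarith [h2.1]
  -- abbreviations for the sums
  set S : ℝ≥0∞ := ∑' k : Fin (n + 1) → ℤ, ∏ j, ((N j k : ℝ≥0∞)) ^ (1 / (n : ℝ)) with hS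
  set R : ℝ≥0∞ := ∏ j, (((𝕋 j).card : ℝ≥0∞)) ^ (1 / (n : ℝ)) with hR
  set G : E n → ℝ≥0∞ := fun y => ∏ j, (∑ T ∈ Fat j,
    (unitTube δ' T.1 T.2).indicator (fun _ => (1 : ℝ≥0∞)) (δ' • y)) ^ (1 / (n : ℝ)) with hG
  set H : E n → ℝ≥0∞ := fun x => ∏ j, (∑ T ∈ Fat j,
    (unitTube δ' T.1 T.2).indicator (fun _ => (1 : ℝ≥0∞)) x) ^ (1 / (n : ℝ)) with hH
  -- step 1
  have hstep1 : ∫⁻ x, F x ≤ ENNReal.ofReal (δ' ^ (n+1)) *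
      (ENNReal.ofReal (C₂ * σ ^ (n+1)) * (ENNReal.ofReal ((12:ℝ) ^ (n+1)) * S)) := by
    rw [lintegral_comp_smul δ' hδ' F (measurable_integrand δ 𝕋)]
    apply mul_le_mul_right
    rw [lintegral_eq_tsum_cube u hu (fun y => F (δ' • y))]
    calc ∑' k : Fin (n+1) → ℤ, ∫⁻ y in cube u k, F (δ' • y)
        ≤ ∑' k : Fin (n+1) → ℤ, ENNReal.ofReal (C₂ * σ ^ (n+1)) *
            (ENNReal.ofReal ((12:ℝ) ^ (n+1)) * ∏ j, ((N j k : ℝ≥0∞)) ^ (1 / (n : ℝ))) :=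
          ENNReal.tsum_le_tsum fun k => hcube k
      _ = _ := by
          rw [ENNReal.tsum_mul_left, ENNReal.tsum_mul_left]
  -- step 2
  have hstep2 : ENNReal.ofReal (u ^ (n+1)) * S ≤ ∫⁻ y, G y := by
    have hGmeas : Measurable G := by
      have := (measurable_integrand δ' Fat).comp
        (measurable_const_smul (M := ℝ) (α := E n) δ')
      exact this
    calc ENNReal.ofReal (u ^ (n+1)) * S
        = ∑' k : Fin (n+1) → ℤ, ENNReal.ofReal (u ^ (n+1)) *
            ∏ j, ((N j k : ℝ≥0∞)) ^ (1 / (n : ℝ)) := ENNReal.tsum_mul_left.symm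
      _ = ∑' k : Fin (n+1) → ℤ, ∫⁻ _y in cube u k,
            (∏ j, ((N j k : ℝ≥0∞)) ^ (1 / (n : ℝ))) := by
          congr 1
          funext k
          rw [setLIntegral_const, volume_cube u hu k]
          ring
      _ ≤ ∑' k : Fin (n+1) → ℤ, ∫⁻ y in cube u k, G y := by
          apply ENNReal.tsum_le_tsum
          intro k
          apply setLIntegral_mono hGmeas
          intro y hy
          apply Finset.prod_le_prod'
          intro j _
          exact ENNReal.rpow_le_rpow (hcount k y hy j) (by positivity)
      _ = ∫⁻ y, G y := (lintegral_eq_tsum_cube u hu G).symm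
  -- step 3
  have hstep3 : ENNReal.ofReal (δ' ^ (n+1)) * ∫⁻ y, G y ≤
      ENNReal.ofReal (C₁ * δ' ^ (n+1)) * (ENNReal.ofReal ((25:ℝ) ^ (n+1)) * R) := by
    have hfrF : ∀ j, ∀ Sb ∈ Fat j, ∃ T ∈ 𝕋 j, Sb.2 = T.2 := fun j Sb hSb =>
      coverFamily_frames hSb
    have hGH : ∫⁻ x, H x = ENNReal.ofReal (δ' ^ (n+1)) * ∫⁻ y, G y := by
      rw [lintegral_comp_smul δ' hδ' H (measurable_integrand δ' Fat)]
    rw [← hGH]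
    calc ∫⁻ x, H x
        ≤ ENNReal.ofReal (C₁ * δ' ^ (n+1)) * ∏ j, (((Fat j).card : ℝ≥0∞)) ^ (1 / (n : ℝ)) :=
          H1 Fat (ortho_of_frames 𝕋 Fat hfrF hortho) (trans_of_frames 𝕋 Fat hfrF htrans)
      _ ≤ _ := by
          apply mul_le_mul_right
          apply prod_rpow_card_le hn (W := 5 ^ n * 5) (a := 25) (by norm_num) ?_
            (fun j => (Fat j).card) (fun j => (𝕋 j).card) ?_
          · push_cast
            have h5n : (5:ℝ) ≤ 5 ^ n := le_self_pow₀ (by norm_num) (by omega)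
            have h25 : (25:ℝ) ^ n = 5 ^ n * 5 ^ n := by rw [← mul_pow]; norm_num
            nlinarith [pow_pos (show (0:ℝ) < 5 by norm_num) n]
          · intro j
            have hcard := coverFamily_card δ' (εf j) AfFat BfFat (fun _ => (3/2) * δ') (3/2) (𝕋 j)
            calc (Fat j).card ≤ (𝕋 j).card *
                ((∏ _i : Fin n, ((⌈2 * ((3/2) * δ') / δ'⌉).toNat + 2)) *
                  ((⌈2 * (3/2 : ℝ)⌉).toNat + 2)) := by
                  simp only [hFat]
                  simpa using hcard
              _ = (𝕋 j).card * (5 ^ n * 5) := by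
                  rw [Finset.prod_const, hwaF, hwbF]
                  simp
  -- final assembly
  have hkey : δ' ^ (n+1) * (C₂ * σ ^ (n+1)) * (12:ℝ) ^ (n+1) * (C₁ * δ' ^ (n+1)) * (25:ℝ) ^ (n+1)
      = ((2400 * (n + 1) : ℝ) ^ (n + 1) * C₂ * C₁ * δ ^ (n+1)) * (u ^ (n+1) * δ' ^ (n+1)) := by
    have e1 : δ ^ (n+1) = σ ^ (n+1) * δ' ^ (n+1) := by
      rw [← mul_pow, hσdef, div_mul_cancel₀ δ hδ'.ne']
    have e2 : (2400 * (n + 1) : ℝ) ^ (n+1) * u ^ (n+1) = (300:ℝ) ^ (n+1) := by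
      rw [← mul_pow]
      congr 1
      rw [hudef]
      field_simp
      ring
    have e3 : (12:ℝ) ^ (n+1) * (25:ℝ) ^ (n+1) = (300:ℝ) ^ (n+1) := by
      rw [← mul_pow]; norm_num
    rw [e1]
    linear_combination (C₂ * C₁ * σ ^ (n+1) * δ' ^ (n+1) * δ' ^ (n+1)) * e3
      - (C₂ * C₁ * σ ^ (n+1) * δ' ^ (n+1) * δ' ^ (n+1)) * e2
  set a1 := ENNReal.ofReal (δ' ^ (n+1)) with ha1
  set a2 := ENNReal.ofReal (C₂ * σ ^ (n+1)) with ha2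
  set a3 := ENNReal.ofReal ((12:ℝ) ^ (n+1)) with ha3
  set a4 := ENNReal.ofReal (u ^ (n+1)) with ha4
  set a5 := ENNReal.ofReal (C₁ * δ' ^ (n+1)) with ha5
  set a6 := ENNReal.ofReal ((25:ℝ) ^ (n+1)) with ha6
  have hc0 : a4 * a1 ≠ 0 := by
    apply mul_ne_zero
    · rw [ha4]; exact (ENNReal.ofReal_pos.mpr (by positivity)).ne'
    · rw [ha1]; exact (ENNReal.ofReal_pos.mpr (by positivity)).ne'
  have hctop : a4 * a1 ≠ ⊤ := by
    rw [ha4, ha1]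
    exact ENNReal.mul_ne_top ENNReal.ofReal_ne_top ENNReal.ofReal_ne_top
  rw [← ENNReal.mul_le_mul_iff_left hc0 hctop]
  calc (∫⁻ x, F x) * (a4 * a1)
      ≤ (a1 * (a2 * (a3 * S))) * (a4 * a1) := mul_le_mul_left hstep1 _
    _ = (a1 * a2 * a3) * ((a4 * S) * a1) := by ring
    _ ≤ (a1 * a2 * a3) * ((∫⁻ y, G y) * a1) :=
        mul_le_mul_right (mul_le_mul_left hstep2 _) _
    _ = (a1 * a2 * a3) * (a1 * ∫⁻ y, G y) := by ring
    _ ≤ (a1 * a2 * a3) * (a5 * (a6 * R)) := mul_le_mul_right hstep3 _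
    _ = (a1 * a2 * a3 * a5 * a6) * R := by ring
    _ = (ENNReal.ofReal ((2400 * (n + 1) : ℝ) ^ (n + 1) * C₂ * C₁ * δ ^ (n+1)) * R) *
          (a4 * a1) := by
        rw [ha1, ha2, ha3, ha4, ha5, ha6]
        rw [← ENNReal.ofReal_mul (by positivity : (0:ℝ) ≤ δ' ^ (n+1)),
          ← ENNReal.ofReal_mul (by positivity : (0:ℝ) ≤ δ' ^ (n+1) * (C₂ * σ ^ (n+1))),
          ← ENNReal.ofReal_mul
            (by positivity : (0:ℝ) ≤ δ' ^ (n+1) * (C₂ * σ ^ (n+1)) * (12:ℝ) ^ (n+1)),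
          ← ENNReal.ofReal_mul
            (by positivity :
              (0:ℝ) ≤ δ' ^ (n+1) * (C₂ * σ ^ (n+1)) * (12:ℝ) ^ (n+1) * (C₁ * δ' ^ (n+1)))]
        rw [hkey]
        rw [ENNReal.ofReal_mul
            (by positivity : (0:ℝ) ≤ (2400 * (n + 1) : ℝ) ^ (n + 1) * C₂ * C₁ * δ ^ (n+1)),
          ENNReal.ofReal_mul (by positivity : (0:ℝ) ≤ u ^ (n+1))]
        ring

end Comp

lemma le_mul_csInf {K a : ℝ} {s : Set ℝ} (hs : s.Nonempty) (ha : 0 ≤ a)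
    (h : ∀ x ∈ s, K ≤ a * x) : K ≤ a * sInf s := by
  rcases eq_or_lt_of_le ha with ha' | ha'
  · obtain ⟨x, hx⟩ := hs
    have := h x hx
    rw [← ha'] at this ⊢
    simpa using this
  · have hKa : K / a ≤ sInf s := by
      apply le_csInf hs
      intro x hx
      rw [div_le_iff₀ ha']
      nlinarith [h x hx]
    calc K = a * (K / a) := by field_simp
      _ ≤ a * sInf s := mul_le_mul_of_nonneg_left hKa ha

end KakAux

/-- Self-similarity (induction on scales) of the best constant in the `d`-linear Kakeya
inequality (`d = n+1 ≥ 2`): there is `c₀ ≥ 1`, depending only on `d` and the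
transversality constant `c`, with `C_kak(δ) ≤ c₀ C_kak(δ/δ') C_kak(δ')` whenever
`0 < δ ≤ δ' ≤ 1`. -/
theorem kakeya_const_self_similar (n : ℕ) (hn : 1 ≤ n) (c : ℝ) (hc : 0 < c) :
    ∃ c₀ : ℝ, 1 ≤ c₀ ∧ ∀ δ δ' : ℝ, 0 < δ → δ ≤ δ' → δ' ≤ 1 →
      KakConst n c δ ≤ c₀ * KakConst n c (δ / δ') * KakConst n c δ' := by
  classical
  refine ⟨max ((2400 * (n + 1) : ℝ) ^ (n + 1)) 1, le_max_right _ _, ?_⟩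
  intro δ δ' hδ hle hd1
  set c₀ := max ((2400 * (n + 1) : ℝ) ^ (n + 1)) 1 with hc₀
  have hc₀1 : (1:ℝ) ≤ c₀ := le_max_right _ _
  have hc₀' : ((2400 * (n + 1) : ℝ) ^ (n + 1)) ≤ c₀ := le_max_left _ _
  have hδ' : 0 < δ' := lt_of_lt_of_le hδ hle
  have hσle : δ ≤ δ / δ' := by
    rw [le_div_iff₀ hδ']
    nlinarith
  have hK : ∀ τ : ℝ, KakConst n c τ = sInf {C : ℝ | 0 ≤ C ∧ KakIneq n c τ C} :=
    fun τ => rfl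
  have hbdd : ∀ τ : ℝ, BddBelow {C : ℝ | 0 ≤ C ∧ KakIneq n c τ C} :=
    fun τ => ⟨0, fun x hx => hx.1⟩
  have hnonneg : ∀ τ : ℝ, 0 ≤ KakConst n c τ := by
    intro τ
    rw [hK τ]
    exact Real.sInf_nonneg fun x hx => hx.1
  by_cases hcase : {C : ℝ | 0 ≤ C ∧ KakIneq n c (δ / δ') C}.Nonempty ∧
      {C : ℝ | 0 ≤ C ∧ KakIneq n c δ' C}.Nonempty
  · obtain ⟨hne2, hne1⟩ := hcase
    have hmem : ∀ C₂ ∈ {C : ℝ | 0 ≤ C ∧ KakIneq n c (δ / δ') C},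
        ∀ C₁ ∈ {C : ℝ | 0 ≤ C ∧ KakIneq n c δ' C},
        KakConst n c δ ≤ c₀ * C₂ * C₁ := by
      intro C₂ hC₂ C₁ hC₁
      rw [hK δ]
      apply csInf_le (hbdd δ)
      refine ⟨mul_nonneg (mul_nonneg (by linarith) hC₂.1) hC₁.1, ?_⟩
      apply KakAux.kakIneq_mono hδ.le ?_
        (KakAux.kakIneq_comp hn hδ hle hd1 hC₁.1 hC₂.1 hC₁.2 hC₂.2)
      have h1 := mul_le_mul_of_nonneg_right
        (mul_le_mul_of_nonneg_right hc₀' hC₂.1) hC₁.1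
      linarith
    have step1 : ∀ C₂ ∈ {C : ℝ | 0 ≤ C ∧ KakIneq n c (δ / δ') C},
        KakConst n c δ ≤ (c₀ * C₂) * KakConst n c δ' := by
      intro C₂ hC₂
      rw [hK δ']
      apply KakAux.le_mul_csInf hne1 (mul_nonneg (by linarith) hC₂.1)
      intro C₁ hC₁
      have := hmem C₂ hC₂ C₁ hC₁
      nlinarith [this]
    have step2 : KakConst n c δ ≤ (c₀ * KakConst n c δ') * KakConst n c (δ / δ') := by
      rw [hK (δ / δ')]
      apply KakAux.le_mul_csInf hne2 (mul_nonneg (by linarith) (hnonneg δ'))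
      intro C₂ hC₂
      have := step1 C₂ hC₂
      nlinarith [this]
    have hring : (c₀ * KakConst n c δ') * KakConst n c (δ / δ')
        = c₀ * KakConst n c (δ / δ') * KakConst n c δ' := by ring
    linarith [step2, hring.le]
  · have hSδ : ¬ {C : ℝ | 0 ≤ C ∧ KakIneq n c δ C}.Nonempty := by
      rintro ⟨C, hC0, hCi⟩
      apply hcase
      constructor
      · exact ⟨(20:ℝ)^(n+1) * C, ⟨by positivity,
          KakAux.kakIneq_up hn hδ hσle hC0 hCi⟩⟩
      · exact ⟨(20:ℝ)^(n+1) * C, ⟨by positivity,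
          KakAux.kakIneq_up hn hδ hle hC0 hCi⟩⟩
    have h0 : KakConst n c δ = 0 := by
      rw [hK δ, Set.not_nonempty_iff_eq_empty.mp hSδ, Real.sInf_empty]
    rw [h0]
    exact mul_nonneg (mul_nonneg (by linarith) (hnonneg _)) (hnonneg _)
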